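/- A graph G on [n] is closed with respect to a labeling if and only if for all edges {i,j} and {k,l} with i < j and k < l: if i = k and j ≠ l then {j,l} is an edge, and if j = l and i ≠ k then {i,k} is an edge. -/

import Mathlib

/-- A graph on `[n]` is closed w.r.t. the labeling iff the local condition on pairs of
edges sharing an endpoint is equivalent to every shortest path between comparable
vertices in the same connected component being monotone (strictly increasing). -/
theorem closed_iff_shortest_paths_monotone {n : ℕ} (G : SimpleGraph (Fin n)) :
    (∀ i j k l : Fin n, G.Adj i j → G.Adj k l → i < j → k < l →
      ((i = k → j ≠ l → G.Adj j l) ∧ (j = l → i ≠ k → G.Adj i k)))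
    ↔
    (∀ i j : Fin n, i < j → G.Reachable i j →
      ∀ p : G.Walk i j, p.IsPath → p.length = G.dist i j →
        List.Chain' (· < ·) p.support) := by
  constructor
  · intro H
    have above : ∀ v x y : Fin n, G.Adj v x → G.Adj v y → v < x → v < y → x ≠ y → G.Adj x y :=
      fun v x y hx hy hvx hvy hne => (H v x v y hx hy hvx hvy).1 rfl hne
    have below : ∀ v x y : Fin n, G.Adj x v → G.Adj y v → x < v → y < v → x ≠ y → G.Adj x y :=
      fun v x y hx hy hxv hyv hne => (H x v y v hx hy hxv hyv).2 rfl hne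
    -- Main lemma: any shortest walk is monotone (in one direction or the other).
    have main : ∀ (a b : Fin n) (p : G.Walk a b), p.length = G.dist a b →
        List.Chain' (· < ·) p.support ∨ List.Chain' (· > ·) p.support := by
      intro a b p
      induction p with
      | nil => intro _; left; exact List.isChain_singleton _
      | @cons a v1 b hadj q ih =>
        intro hlen
        have hlen' : q.length + 1 = G.dist a b := by simpa using hlen
        have hq : q.length = G.dist v1 b := by
          have h1 : G.dist v1 b ≤ q.length := SimpleGraph.dist_le q
          obtain ⟨w, hw⟩ := (SimpleGraph.Reachable.exists_walk_length_eq_dist ⟨q⟩ :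
            ∃ w : G.Walk v1 b, w.length = G.dist v1 b)
          have h2 : G.dist a b ≤ w.length + 1 := by
            have := SimpleGraph.dist_le (SimpleGraph.Walk.cons hadj w)
            simpa using this
          omega
        rcases ih hq with hcl | hcl
        · -- q's support is increasing
          cases q with
          | nil =>
            rcases lt_or_gt_of_ne (G.ne_of_adj hadj) with h | h
            · left; exact List.isChain_pair.mpr h
            · right; exact List.isChain_pair.mpr h
          | @cons _ v2 _ h2 q2 =>
            rcases lt_or_gt_of_ne (G.ne_of_adj hadj) with h | h
            · left
              simp only [SimpleGraph.Walk.support_cons] at hcl ⊢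
              exact List.isChain_cons_cons.mpr ⟨h, hcl⟩
            · -- a > v1 but v1 < v2 : shortcut
              exfalso
              have hv12 : v1 < v2 := by
                simp only [SimpleGraph.Walk.support_cons] at hcl
                rw [q2.support_eq_cons] at hcl
                exact hcl.rel_head
              have hlq : q2.length + 2 = G.dist a b := by
                simp only [SimpleGraph.Walk.length_cons] at hlen'
                omega
              by_cases hav2 : a = v2
              · subst hav2
                have := SimpleGraph.dist_le q2
                omega
              · have hadj2 : G.Adj a v2 := above v1 a v2 hadj.symm h2 h hv12 hav2
                have := SimpleGraph.dist_le (SimpleGraph.Walk.cons hadj2 q2)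
                simp only [SimpleGraph.Walk.length_cons] at this
                omega
        · -- q's support is decreasing
          cases q with
          | nil =>
            rcases lt_or_gt_of_ne (G.ne_of_adj hadj) with h | h
            · left; exact List.isChain_pair.mpr h
            · right; exact List.isChain_pair.mpr h
          | @cons _ v2 _ h2 q2 =>
            rcases lt_or_gt_of_ne (G.ne_of_adj hadj) with h | h
            · -- a < v1 but v1 > v2 : shortcut
              exfalso
              have hv12 : v2 < v1 := by
                simp only [SimpleGraph.Walk.support_cons] at hcl
                rw [q2.support_eq_cons] at hcl
                exact hcl.rel_head
              have hlq : q2.length + 2 = G.dist a b := by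
                simp only [SimpleGraph.Walk.length_cons] at hlen'
                omega
              by_cases hav2 : a = v2
              · subst hav2
                have := SimpleGraph.dist_le q2
                omega
              · have hadj2 : G.Adj a v2 := below v1 a v2 hadj h2.symm h hv12 hav2
                have := SimpleGraph.dist_le (SimpleGraph.Walk.cons hadj2 q2)
                simp only [SimpleGraph.Walk.length_cons] at this
                omega
            · right
              simp only [SimpleGraph.Walk.support_cons] at hcl ⊢
              exact List.isChain_cons_cons.mpr ⟨h, hcl⟩
    intro i j hij _hr p _hp hlen
    rcases main i j p hlen with h | h
    · exact h
    · -- decreasing: contradiction with i < j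
      exfalso
      have hmem : j ∈ p.support := p.end_mem_support
      have key : ∀ (l : List (Fin n)) (a b : Fin n),
          List.Chain' (· > ·) (a :: l) → b ∈ a :: l → b ≤ a := by
        intro l
        induction l with
        | nil => intro a b _ hb; simp at hb; exact hb.le
        | cons c l ihl =>
          intro a b hch hb
          rcases List.mem_cons.mp hb with rfl | hb
          · exact le_rfl
          · have h1 : a > c := (List.isChain_cons_cons.mp hch).1
            have h2 := ihl c b (List.isChain_cons_cons.mp hch).2 hb
            exact h2.trans h1.le
      have := key p.support.tail i j (by rw [← p.support_eq_cons]; exact h)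
        (by rw [← p.support_eq_cons]; exact hmem)
      exact absurd this (not_le.mpr hij)
  · intro H i j k l hij hkl hij' hkl'
    constructor
    · rintro rfl hne
      by_contra hn
      -- walk j - i - l (or l - i - j) of length 2 realizes the distance
      have hreach : G.Reachable j l := ⟨SimpleGraph.Walk.cons hij.symm (SimpleGraph.Walk.cons hkl SimpleGraph.Walk.nil)⟩
      have hd2 : G.dist j l = 2 := by
        have h1 : G.dist j l ≤ 2 := by
          have := SimpleGraph.dist_le (SimpleGraph.Walk.cons hij.symm (SimpleGraph.Walk.cons hkl SimpleGraph.Walk.nil))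
          simpa using this
        have h0 : G.dist j l ≠ 0 := by
          intro h
          rcases SimpleGraph.dist_eq_zero_iff_eq_or_not_reachable.mp h with h | h
          · exact hne h
          · exact h hreach
        have h1' : G.dist j l ≠ 1 := by
          intro h
          exact hn (SimpleGraph.dist_eq_one_iff_adj.mp h)
        omega
      rcases lt_or_gt_of_ne hne with hjl | hjl
      · have w : G.Walk j l := SimpleGraph.Walk.cons hij.symm (SimpleGraph.Walk.cons hkl SimpleGraph.Walk.nil)
        have hpath : (SimpleGraph.Walk.cons hij.symm (SimpleGraph.Walk.cons hkl SimpleGraph.Walk.nil) : G.Walk j l).IsPath := by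
          simp [SimpleGraph.Walk.isPath_def]
          exact ⟨⟨(G.ne_of_adj hij).symm, hne⟩, G.ne_of_adj hkl⟩
        have := H j l hjl hreach _ hpath (by simp [hd2])
        simp only [SimpleGraph.Walk.support_cons, SimpleGraph.Walk.support_nil,
          List.isChain_cons_cons] at this
        exact absurd (List.isChain_cons_cons.mp this).1 (not_lt.mpr hij'.le)
      · have hreach' : G.Reachable l j := hreach.symm
        have hpath : (SimpleGraph.Walk.cons hkl.symm (SimpleGraph.Walk.cons hij SimpleGraph.Walk.nil) : G.Walk l j).IsPath := by
          simp [SimpleGraph.Walk.isPath_def]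
          exact ⟨⟨(G.ne_of_adj hkl).symm, Ne.symm hne⟩, G.ne_of_adj hij⟩
        have hd2' : G.dist l j = 2 := by rw [SimpleGraph.dist_comm]; exact hd2
        have := H l j hjl hreach' _ hpath (by simp [hd2'])
        simp only [SimpleGraph.Walk.support_cons, SimpleGraph.Walk.support_nil,
          List.isChain_cons_cons] at this
        exact absurd (List.isChain_cons_cons.mp this).1 (not_lt.mpr hkl'.le)
    · rintro rfl hne
      by_contra hn
      have hreach : G.Reachable i k := ⟨SimpleGraph.Walk.cons hij (SimpleGraph.Walk.cons hkl.symm SimpleGraph.Walk.nil)⟩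
      have hd2 : G.dist i k = 2 := by
        have h1 : G.dist i k ≤ 2 := by
          have := SimpleGraph.dist_le (SimpleGraph.Walk.cons hij (SimpleGraph.Walk.cons hkl.symm SimpleGraph.Walk.nil))
          simpa using this
        have h0 : G.dist i k ≠ 0 := by
          intro h
          rcases SimpleGraph.dist_eq_zero_iff_eq_or_not_reachable.mp h with h | h
          · exact hne h
          · exact h hreach
        have h1' : G.dist i k ≠ 1 := by
          intro h
          exact hn (SimpleGraph.dist_eq_one_iff_adj.mp h)
        omega
      rcases lt_or_gt_of_ne hne with hik | hik
      · have hpath : (SimpleGraph.Walk.cons hij (SimpleGraph.Walk.cons hkl.symm SimpleGraph.Walk.nil) : G.Walk i k).IsPath := by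
          simp [SimpleGraph.Walk.isPath_def]
          exact ⟨⟨G.ne_of_adj hij, hne⟩, (G.ne_of_adj hkl).symm⟩
        have := H i k hik hreach _ hpath (by simp [hd2])
        simp only [SimpleGraph.Walk.support_cons, SimpleGraph.Walk.support_nil,
          List.isChain_cons_cons] at this
        exact absurd (List.isChain_cons_cons.mp (List.isChain_cons_cons.mp this).2).1 (not_lt.mpr hkl'.le)
      · have hpath : (SimpleGraph.Walk.cons hkl (SimpleGraph.Walk.cons hij.symm SimpleGraph.Walk.nil) : G.Walk k i).IsPath := by
          simp [SimpleGraph.Walk.isPath_def]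
          exact ⟨⟨G.ne_of_adj hkl, Ne.symm hne⟩, (G.ne_of_adj hij).symm⟩
        have hd2' : G.dist k i = 2 := by rw [SimpleGraph.dist_comm]; exact hd2
        have := H k i hik hreach.symm _ hpath (by simp [hd2'])
        simp only [SimpleGraph.Walk.support_cons, SimpleGraph.Walk.support_nil,
          List.isChain_cons_cons] at this
        exact absurd (List.isChain_cons_cons.mp (List.isChain_cons_cons.mp this).2).1 (not_lt.mpr hij'.le)
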